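/- Let V : ℝⁿ × (0,∞) → ℝ be continuous and positive, let p > 1, and let u : ℝⁿ × [0,∞) → ℝ be continuous, C² in the space variable and C¹ in the time variable on ℝⁿ × (0,∞), bounded from below, satisfying u_t = Δu + |u|^p V on ℝⁿ × (0,∞) and u(·,0) = u₀ ≥ 0. Then u ≥ 0 everywhere on ℝⁿ × [0,∞). -/

import Mathlib

open MeasureTheory Real Set

/-- The Laplacian in the space variables on Euclidean space: the sum of the pure second
directional derivatives along the standard coordinate directions. -/
noncomputable def laplacian {n : ℕ} (f : EuclideanSpace ℝ (Fin n) → ℝ)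
    (x : EuclideanSpace ℝ (Fin n)) : ℝ :=
  ∑ i, fderiv ℝ (fun y => fderiv ℝ f y (EuclideanSpace.single i 1)) x (EuclideanSpace.single i 1)


section AuxLemmas
open Filter Topology


lemma aux_secondDeriv_nonneg {f : ℝ → ℝ} {a : ℝ} (hf : ContDiff ℝ 2 f)
    (h : IsLocalMin f a) : 0 ≤ deriv (deriv f) a := by
  by_contra hc
  push_neg at hc
  have hf2 : ContDiff ℝ 1 (deriv f) := by
    rw [show (2 : WithTop ℕ∞) = 1 + 1 from rfl, contDiff_succ_iff_deriv] at hf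
    exact hf.2.2
  have hd1 : Differentiable ℝ f := hf.differentiable (by norm_num)
  have hdd : HasDerivAt (deriv f) (deriv (deriv f) a) a :=
    ((hf2.differentiable (by norm_num)) a).hasDerivAt
  have h0 : deriv f a = 0 := h.deriv_eq_zero
  -- slope tendsto
  have hslope : Tendsto (slope (deriv f) a) (𝓝[>] a) (𝓝 (deriv (deriv f) a)) :=
    (hasDerivAt_iff_tendsto_slope.mp hdd).mono_left
      (nhdsWithin_mono a (fun x hx => ne_of_gt hx))
  have hev : ∀ᶠ x in 𝓝[>] a, slope (deriv f) a x < 0 :=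
    hslope.eventually_lt_const hc
  rw [eventually_nhdsWithin_iff] at hev
  obtain ⟨δ, hδ, hδ'⟩ := Metric.eventually_nhds_iff.mp hev
  -- deriv f < 0 on Ioo a (a+δ)
  have hneg : ∀ x ∈ Ioo a (a + δ), deriv f x < 0 := by
    intro x hx
    have hs := hδ' (y := x) (by rw [Real.dist_eq, abs_of_pos (by linarith [hx.1] : (0:ℝ) < x - a)]; linarith [hx.2]) hx.1
    rw [slope_def_field, h0, sub_zero] at hs
    have : x - a > 0 := by linarith [hx.1]
    have := div_neg_iff.mp (by simpa [div_eq_iff] using hs)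
    rcases this with ⟨h1, h2⟩ | ⟨h1, h2⟩
    · linarith
    · exact h1
  have hanti : StrictAntiOn f (Icc a (a + δ)) := by
    apply strictAntiOn_of_deriv_neg (convex_Icc _ _) hd1.continuous.continuousOn
    intro x hx
    rw [interior_Icc] at hx
    exact hneg x hx
  -- contradiction with local min
  have hmem : Ioo a (a + δ) ∈ 𝓝[>] a := Ioo_mem_nhdsGT_of_mem ⟨le_rfl, by linarith⟩
  have hminev : ∀ᶠ x in 𝓝[>] a, f a ≤ f x :=
    (h.filter_mono (nhdsWithin_le_nhds)).mono (fun x hx => hx)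
  obtain ⟨x, hx1, hx2⟩ := (hminev.and (eventually_of_mem hmem (fun x hx => hx))).exists
  have : f x < f a := hanti ⟨le_rfl, by linarith [hx2.2]⟩ ⟨le_of_lt hx2.1, le_of_lt hx2.2⟩ hx2.1
  linarith


lemma aux_line_deriv {E : Type*} [NormedAddCommGroup E] [NormedSpace ℝ E]
    {f : E → ℝ} (hf : ContDiff ℝ 2 f) (x v : E) :
    deriv (deriv (fun s : ℝ => f (x + s • v))) 0
      = fderiv ℝ (fun y => fderiv ℝ f y v) x v := by
  have hL : ∀ s : ℝ, HasDerivAt (fun s : ℝ => x + s • v) v s := fun s => by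
    simpa using ((hasDerivAt_id s).smul_const v).const_add x
  have hd1 : Differentiable ℝ f := hf.differentiable (by norm_num)
  have hderiv : deriv (fun s : ℝ => f (x + s • v)) = fun s => fderiv ℝ f (x + s • v) v := by
    funext s
    exact (((hd1 (x + s • v)).hasFDerivAt).comp_hasDerivAt s (hL s)).deriv
  rw [hderiv]
  have h1 : ContDiff ℝ 1 (fderiv ℝ f) := hf.fderiv_right (by norm_num)
  have hg : Differentiable ℝ (fun y => fderiv ℝ f y v) :=
    fun y => ((h1.differentiable (by norm_num)) y).clm_apply (differentiableAt_const v)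
  have : HasDerivAt (fun s : ℝ => fderiv ℝ f (x + s • v) v)
      (fderiv ℝ (fun y => fderiv ℝ f y v) x v) 0 := by
    have h2 := ((hg (x + (0:ℝ) • v)).hasFDerivAt).comp_hasDerivAt 0 (hL 0)
    simpa [Function.comp_def] using h2
  exact this.deriv

lemma aux_contDiff_line {E : Type*} [NormedAddCommGroup E] [NormedSpace ℝ E]
    {f : E → ℝ} (hf : ContDiff ℝ 2 f) (x v : E) :
    ContDiff ℝ 2 (fun s : ℝ => f (x + s • v)) :=
  hf.comp (contDiff_const.add (contDiff_id.smul contDiff_const))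

lemma aux_laplacian_nonneg {n : ℕ} {f : EuclideanSpace ℝ (Fin n) → ℝ}
    (hf : ContDiff ℝ 2 f) {x : EuclideanSpace ℝ (Fin n)} (h : IsLocalMin f x) :
    0 ≤ laplacian f x := by
  apply Finset.sum_nonneg
  intro i _
  rw [← aux_line_deriv hf x (EuclideanSpace.single i 1)]
  apply aux_secondDeriv_nonneg (aux_contDiff_line hf _ _)
  have h' : IsLocalMin f ((fun s : ℝ => x + s • EuclideanSpace.single i 1) 0) := by
    simpa using h
  exact IsLocalMin.comp_continuous (g := fun s : ℝ => x + s • EuclideanSpace.single i 1) h' (by fun_prop)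

lemma aux_laplacian_add {n : ℕ} {f g : EuclideanSpace ℝ (Fin n) → ℝ}
    (hf : ContDiff ℝ 2 f) (hg : ContDiff ℝ 2 g) (x : EuclideanSpace ℝ (Fin n)) :
    laplacian (fun y => f y + g y) x = laplacian f x + laplacian g x := by
  unfold laplacian
  rw [← Finset.sum_add_distrib]
  apply Finset.sum_congr rfl
  intro i _
  set v := EuclideanSpace.single i (1:ℝ) with hv
  have hdf : ∀ y, DifferentiableAt ℝ f y := fun y => hf.differentiable (by norm_num) y
  have hdg : ∀ y, DifferentiableAt ℝ g y := fun y => hg.differentiable (by norm_num) y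
  have h1 : (fun y => fderiv ℝ (fun z => f z + g z) y v)
      = fun y => fderiv ℝ f y v + fderiv ℝ g y v := by
    funext y
    rw [fderiv_fun_add (hdf y) (hdg y)]
    simp
  rw [h1]
  have hf1 : DifferentiableAt ℝ (fun y => fderiv ℝ f y v) x :=
    ((hf.fderiv_right (m := 1) (by norm_num)).differentiable (by norm_num) x).clm_apply (differentiableAt_const v)
  have hg1 : DifferentiableAt ℝ (fun y => fderiv ℝ g y v) x :=
    ((hg.fderiv_right (m := 1) (by norm_num)).differentiable (by norm_num) x).clm_apply (differentiableAt_const v)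
  rw [fderiv_fun_add hf1 hg1]
  simp

lemma aux_laplacian_quad {n : ℕ} (a c : ℝ) (x : EuclideanSpace ℝ (Fin n)) :
    laplacian (fun y => a * ‖y‖^2 + c) x = 2 * n * a := by
  have hq : ContDiff ℝ 2 (fun y : EuclideanSpace ℝ (Fin n) => a * ‖y‖^2 + c) :=
    (contDiff_const.mul (contDiff_norm_sq (𝕜 := ℝ))).add contDiff_const
  unfold laplacian
  have key : ∀ i : Fin n, fderiv ℝ
      (fun y => fderiv ℝ (fun y : EuclideanSpace ℝ (Fin n) => a * ‖y‖^2 + c) y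
        (EuclideanSpace.single i 1)) x (EuclideanSpace.single i 1) = 2*a := by
    intro i
    rw [← aux_line_deriv hq x (EuclideanSpace.single i 1)]
    have hexp : (fun s : ℝ => a * ‖x + s • (EuclideanSpace.single i 1 : EuclideanSpace ℝ (Fin n))‖^2 + c)
        = fun s => a*s^2 + (2*a*(x i))*s + (a*‖x‖^2 + c) := by
      funext s
      have h1 : ‖x + s • (EuclideanSpace.single i 1 : EuclideanSpace ℝ (Fin n))‖^2
          = ‖x‖^2 + 2 * inner ℝ x (s • (EuclideanSpace.single i 1 : EuclideanSpace ℝ (Fin n)))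
            + ‖s • (EuclideanSpace.single i 1 : EuclideanSpace ℝ (Fin n))‖^2 :=
        norm_add_sq_real _ _
      have h2 : inner ℝ x (s • (EuclideanSpace.single i 1 : EuclideanSpace ℝ (Fin n))) = s * x i := by
        rw [real_inner_smul_right, EuclideanSpace.inner_single_right]
        simp
      have h3 : ‖s • (EuclideanSpace.single i 1 : EuclideanSpace ℝ (Fin n))‖^2 = s^2 := by
        rw [norm_smul, EuclideanSpace.norm_single]
        simp [sq_abs]
      rw [h1, h2, h3]; ring
    show deriv (deriv (fun s : ℝ => a * ‖x + s • (EuclideanSpace.single i 1 : EuclideanSpace ℝ (Fin n))‖^2 + c)) 0 = 2*a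
    rw [hexp]
    have hder : deriv (fun s : ℝ => a*s^2 + (2*a*(x i))*s + (a*‖x‖^2+c))
        = fun s => 2*a*s + 2*a*(x i) := by
      funext s
      have : HasDerivAt (fun s : ℝ => a*s^2 + (2*a*(x i))*s + (a*‖x‖^2+c))
          (2*a*s + 2*a*(x i)) s := by
        have h1 : HasDerivAt (fun s : ℝ => a*s^2) (a*(2*s^1)) s :=
          (hasDerivAt_pow 2 s).const_mul a
        have h2 : HasDerivAt (fun s : ℝ => (2*a*(x i))*s) (2*a*(x i)) s := by
          simpa using (hasDerivAt_id s).const_mul (2*a*(x i))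
        have := (h1.add h2).add_const (a*‖x‖^2+c)
        exact this.congr_deriv (by ring)
      exact this.deriv
    rw [hder]
    have : HasDerivAt (fun s : ℝ => 2*a*s + 2*a*(x i)) (2*a) 0 := by
      simpa using ((hasDerivAt_id (0:ℝ)).const_mul (2*a)).add_const (2*a*(x i))
    rw [this.deriv]
  rw [Finset.sum_congr rfl (fun i _ => key i)]
  simp [Finset.sum_const]
  ring

lemma aux_laplacian_decomp {n : ℕ} {f : EuclideanSpace ℝ (Fin n) → ℝ}
    (hf : ContDiff ℝ 2 f) (a c : ℝ) (x : EuclideanSpace ℝ (Fin n)) :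
    laplacian (fun y => f y + (a * ‖y‖^2 + c)) x = laplacian f x + 2 * n * a := by
  have hg : ContDiff ℝ 2 (fun y : EuclideanSpace ℝ (Fin n) => a * ‖y‖^2 + c) :=
    (contDiff_const.mul (contDiff_norm_sq (𝕜 := ℝ))).add contDiff_const
  have h1 : laplacian (fun y => f y + (a * ‖y‖^2 + c)) x
      = laplacian f x + laplacian (fun y : EuclideanSpace ℝ (Fin n) => a * ‖y‖^2 + c) x :=
    aux_laplacian_add hf hg x
  rw [h1, aux_laplacian_quad a c x]

end AuxLemmas

open Filter Topology in
/-- A bounded-below classical solution of the weighted superlinear heat equation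
`u_t = Δu + |u|^p V` on `ℝⁿ × (0,∞)` with positive continuous weight `V` and nonnegative
initial datum is nonnegative everywhere on `ℝⁿ × [0,∞)`. -/
theorem nonneg_of_solution_weighted_superlinear_heat
    {n : ℕ} (p : ℝ) (hp : 1 < p)
    (u V : EuclideanSpace ℝ (Fin n) → ℝ → ℝ)
    -- u is continuous up to t = 0
    (hu_cont : ContinuousOn (fun q : EuclideanSpace ℝ (Fin n) × ℝ => u q.1 q.2)
      {q : EuclideanSpace ℝ (Fin n) × ℝ | 0 ≤ q.2})
    -- u is C² in the space variable for every t > 0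
    (hu_space : ∀ t : ℝ, 0 < t → ContDiff ℝ 2 (fun x => u x t))
    -- u is C¹ in the time variable on (0,∞)
    (hu_time : ∀ x, ContDiffOn ℝ 1 (fun s => u x s) (Ioi 0))
    -- V is continuous on ℝⁿ × (0,∞)
    (hV_cont : ContinuousOn (fun q : EuclideanSpace ℝ (Fin n) × ℝ => V q.1 q.2)
      {q : EuclideanSpace ℝ (Fin n) × ℝ | 0 < q.2})
    -- V is positive
    (hV_pos : ∀ x, ∀ t : ℝ, 0 < t → 0 < V x t)
    -- u is bounded from below
    (hbelow : ∃ A : ℝ, ∀ x, ∀ t : ℝ, 0 ≤ t → A ≤ u x t)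
    -- u solves u_t = Δu + |u|^p V on ℝⁿ × (0,∞)
    (hpde : ∀ x, ∀ t : ℝ, 0 < t →
      deriv (fun s => u x s) t = laplacian (fun y => u y t) x + |u x t| ^ p * V x t)
    -- nonnegative initial datum
    (h0 : ∀ x, 0 ≤ u x 0) :
    ∀ x, ∀ t : ℝ, 0 ≤ t → 0 ≤ u x t := by

  obtain ⟨A₀, hA₀⟩ := hbelow
  set A := min A₀ 0 with hA
  have hAle : ∀ x, ∀ t : ℝ, 0 ≤ t → A ≤ u x t :=
    fun x t ht => le_trans (min_le_left _ _) (hA₀ x t ht)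
  have hAneg : A ≤ 0 := min_le_right _ _
  intro x t ht
  rcases eq_or_lt_of_le ht with heq | htpos
  · rw [← heq]; exact h0 x
  have claim : ∀ ε : ℝ, 0 < ε →
      0 ≤ u x t + (ε * ‖x‖^2 + ε * ((2*(n:ℝ)+1) * t)) := by
    intro ε hε
    set R : ℝ := ‖x‖ + Real.sqrt (-A/ε) with hR
    have hsq : Real.sqrt (-A/ε) ^ 2 = -A/ε :=
      Real.sq_sqrt (div_nonneg (by linarith) hε.le)
    have hRx : ‖x‖ ≤ R := le_add_of_nonneg_right (Real.sqrt_nonneg _)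
    have hRA : -A ≤ ε * R^2 := by
      have h1 : -A/ε ≤ R^2 := by
        nlinarith [norm_nonneg x, Real.sqrt_nonneg (-A/ε)]
      calc -A = ε * (-A/ε) := by field_simp
        _ ≤ ε * R^2 := by nlinarith
    set w : EuclideanSpace ℝ (Fin n) × ℝ → ℝ :=
      fun q => u q.1 q.2 + (ε * ‖q.1‖^2 + ε * ((2*(n:ℝ)+1) * q.2)) with hw
    set K : Set (EuclideanSpace ℝ (Fin n) × ℝ) := Metric.closedBall 0 R ×ˢ Icc 0 t with hK
    have hKc : IsCompact K := (isCompact_closedBall _ _).prod isCompact_Icc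
    have hKsub : K ⊆ {q : EuclideanSpace ℝ (Fin n) × ℝ | 0 ≤ q.2} := fun q hq => hq.2.1
    have hwc : ContinuousOn w K := by
      apply ContinuousOn.add (hu_cont.mono hKsub)
      fun_prop
    have hxK : (x, t) ∈ K := ⟨mem_closedBall_zero_iff.mpr hRx, ⟨ht, le_rfl⟩⟩
    obtain ⟨⟨x₁, t₁⟩, hmem, hmin⟩ := hKc.exists_isMinOn ⟨(x,t), hxK⟩ hwc
    have ht₁0 : 0 ≤ t₁ := hmem.2.1
    have ht₁t : t₁ ≤ t := hmem.2.2
    have hminxt : u x₁ t₁ + (ε * ‖x₁‖^2 + ε * ((2*(n:ℝ)+1) * t₁))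
        ≤ u x t + (ε * ‖x‖^2 + ε * ((2*(n:ℝ)+1) * t)) :=
      isMinOn_iff.mp hmin (x,t) hxK
    have hm0 : 0 ≤ u x₁ t₁ + (ε * ‖x₁‖^2 + ε * ((2*(n:ℝ)+1) * t₁)) := by
      by_contra hmlt
      push_neg at hmlt
      have ht₁pos : 0 < t₁ := by
        rcases eq_or_lt_of_le ht₁0 with heq1 | h
        · rw [← heq1] at hmlt
          have h1 := h0 x₁
          have h2 : 0 ≤ ε * ‖x₁‖^2 := mul_nonneg hε.le (sq_nonneg _)
          linarith
        · exact h
      have hx₁R : ‖x₁‖ < R := by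
        rcases lt_or_eq_of_le (mem_closedBall_zero_iff.mp hmem.1) with h | h
        · exact h
        · exfalso
          rw [h] at hmlt
          have h1 := hAle x₁ t₁ ht₁0
          have h2 : 0 ≤ ε * ((2*(n:ℝ)+1) * t₁) := by positivity
          linarith
      -- spatial local min
      have hfC : ContDiff ℝ 2
          (fun y : EuclideanSpace ℝ (Fin n) =>
            u y t₁ + (ε * ‖y‖^2 + ε * ((2*(n:ℝ)+1) * t₁))) :=
        (hu_space t₁ ht₁pos).add
          ((contDiff_const.mul (contDiff_norm_sq (𝕜 := ℝ))).add contDiff_const)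
      have hflocmin : IsLocalMin
          (fun y : EuclideanSpace ℝ (Fin n) =>
            u y t₁ + (ε * ‖y‖^2 + ε * ((2*(n:ℝ)+1) * t₁))) x₁ := by
        apply IsMinOn.isLocalMin (s := Metric.closedBall (0 : EuclideanSpace ℝ (Fin n)) R)
        · exact isMinOn_iff.mpr fun y hy => isMinOn_iff.mp hmin (y, t₁) ⟨hy, hmem.2⟩
        · exact mem_of_superset
            (Metric.isOpen_ball.mem_nhds (mem_ball_zero_iff.mpr hx₁R))
            Metric.ball_subset_closedBall
      have hlap : (0:ℝ) ≤ laplacian (fun y => u y t₁) x₁ + 2 * (n:ℝ) * ε := by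
        rw [← aux_laplacian_decomp (hu_space t₁ ht₁pos) ε (ε * ((2*(n:ℝ)+1) * t₁)) x₁]
        exact aux_laplacian_nonneg hfC hflocmin
      -- time derivative at the minimum
      have hud : DifferentiableAt ℝ (fun s => u x₁ s) t₁ :=
        ((hu_time x₁).contDiffAt (Ioi_mem_nhds ht₁pos)).differentiableAt (by norm_num)
      have h2d : HasDerivAt (fun s : ℝ => ε * ‖x₁‖^2 + ε * ((2*(n:ℝ)+1) * s))
          (ε * (2*(n:ℝ)+1)) t₁ := by
        have := (((hasDerivAt_id t₁).const_mul (2*(n:ℝ)+1)).const_mul ε).const_add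
          (ε * ‖x₁‖^2)
        simpa using this
      have hgd : HasDerivAt
          (fun s : ℝ => u x₁ s + (ε * ‖x₁‖^2 + ε * ((2*(n:ℝ)+1) * s)))
          (deriv (fun s => u x₁ s) t₁ + ε * (2*(n:ℝ)+1)) t₁ :=
        hud.hasDerivAt.add h2d
      have htend : Tendsto
          (slope (fun s : ℝ => u x₁ s + (ε * ‖x₁‖^2 + ε * ((2*(n:ℝ)+1) * s))) t₁)
          (𝓝[<] t₁) (𝓝 (deriv (fun s => u x₁ s) t₁ + ε * (2*(n:ℝ)+1))) :=
        (hasDerivAt_iff_tendsto_slope.mp hgd).mono_left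
          (nhdsWithin_mono _ fun s hs => ne_of_lt hs)
      have hD : deriv (fun s => u x₁ s) t₁ + ε * (2*(n:ℝ)+1) ≤ 0 := by
        apply le_of_tendsto htend
        apply mem_of_superset (Ioo_mem_nhdsLT_of_mem (⟨ht₁pos, le_rfl⟩ : t₁ ∈ Ioc 0 t₁))
        intro s hs
        have hsK : (x₁, s) ∈ K := ⟨hmem.1, ⟨hs.1.le, le_trans hs.2.le ht₁t⟩⟩
        have hge : u x₁ t₁ + (ε * ‖x₁‖^2 + ε * ((2*(n:ℝ)+1) * t₁))
            ≤ u x₁ s + (ε * ‖x₁‖^2 + ε * ((2*(n:ℝ)+1) * s)) :=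
          isMinOn_iff.mp hmin (x₁, s) hsK
        show slope (fun s : ℝ => u x₁ s + (ε * ‖x₁‖^2 + ε * ((2*(n:ℝ)+1) * s))) t₁ s ≤ 0
        rw [slope_def_field]
        apply div_nonpos_iff.mpr
        left
        constructor
        · linarith
        · linarith [hs.2]
      have hPDE := hpde x₁ t₁ ht₁pos
      have hP : 0 ≤ |u x₁ t₁| ^ p * V x₁ t₁ :=
        mul_nonneg (Real.rpow_nonneg (abs_nonneg _) p) (hV_pos x₁ t₁ ht₁pos).le
      linarith [hlap, hD, hPDE, hP, hε]
    linarith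
  -- conclude from the claim
  by_contra hneg
  push_neg at hneg
  set C : ℝ := ‖x‖^2 + (2*(n:ℝ)+1) * t with hC
  have hCpos : 0 < C + 1 := by positivity
  have hε : 0 < -u x t / (C + 1) := div_pos (by linarith) hCpos
  have := claim (-u x t / (C + 1)) hε
  have hrw : u x t + (-u x t / (C + 1) * ‖x‖^2 + -u x t / (C + 1) * ((2*(n:ℝ)+1) * t))
      = u x t / (C + 1) := by
    field_simp
    ring
  rw [hrw] at this
  have h2 : u x t = u x t / (C + 1) * (C + 1) := by field_simp
  linarith [mul_nonneg this hCpos.le]
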